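/- arXiv:1310.3130 — 2 statements merged into one kernel-verified Lean document; each statement's English description precedes it below -/
import Mathlib

section
/- For every y ∈ ℝ, A₂(y) = −(1/(4√(2π))) y e^{−2y²} + (1/(4√2 π)) e^{−2y²} + (3/(4√(6π))) y e^{−2y²/3} erfc(−2y/√3) + (1/2 + 2y²) A₁(y). -/
open MeasureTheory Real Filter Set Topology

/-- The error function `erf`. -/
noncomputable def erf (x : ℝ) : ℝ := (2 / Real.sqrt Real.pi) * ∫ t in (0 : ℝ)..x, Real.exp (-t ^ 2)

/-- The complementary error function `erfc`. -/
noncomputable def erfc (x : ℝ) : ℝ := 1 - erf x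

noncomputable def A₁ (y : ℝ) : ℝ :=
  -(1 / (2 * Real.sqrt (2 * Real.pi))) *
    ∫ t in Set.Ioi (0 : ℝ), Real.exp (-2 * (t - y) ^ 2) * erfc t

noncomputable def A₂ (y : ℝ) : ℝ :=
  (1 / Real.sqrt (2 * Real.pi)) *
    ∫ t in Set.Ioi (0 : ℝ),
      Real.exp (-2 * (t - y) ^ 2) * t * (Real.exp (-t ^ 2) / Real.sqrt Real.pi - t * erfc t)

noncomputable def A₃ (y : ℝ) : ℝ :=
  (1 / 4) * (1 + erf (Real.sqrt 2 * y)) *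
    (-(y * Real.exp (-2 * y ^ 2)) / Real.sqrt (2 * Real.pi) +
      (1 / 4 + y ^ 2) * (1 - erf (Real.sqrt 2 * y)))

noncomputable def A₄ (y : ℝ) : ℝ :=
  -(1 / Real.sqrt (2 * Real.pi)) *
    ∫ t₁ in Set.Ioi (0 : ℝ), ∫ t₂ in Set.Ioo (0 : ℝ) t₁,
      (1 / (t₁ - t₂)) *
        (Real.exp (-2 * (t₁ - y) ^ 2) * (erf (t₁ - t₂) + erf (Real.sqrt 2 * (t₂ - y))) +
          Real.exp (-2 * (t₂ - y) ^ 2) * (erf (t₁ - t₂) - erf (Real.sqrt 2 * (t₁ - y))))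

noncomputable def A (y : ℝ) : ℝ := A₁ y + A₂ y + A₃ y + A₄ y



lemma hasDerivAt_erf (x : ℝ) : HasDerivAt erf (2 / Real.sqrt Real.pi * Real.exp (-x ^ 2)) x := by
  have hc : Continuous fun t : ℝ => Real.exp (-t ^ 2) := by continuity
  exact ((hc.integral_hasStrictDerivAt 0 x).hasDerivAt.const_mul _)

lemma continuous_erf : Continuous erf :=
  continuous_iff_continuousAt.2 fun x => (hasDerivAt_erf x).continuousAt

lemma continuous_erfc : Continuous erfc := continuous_const.sub continuous_erf

lemma erf_zero : erf 0 = 0 := by simp [erf]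

lemma integral_gauss_Ioi : ∫ x in Ioi (0:ℝ), Real.exp (-x ^ 2) = Real.sqrt Real.pi / 2 := by
  have := integral_gaussian_Ioi 1
  simpa using this

lemma integrableOn_gauss : IntegrableOn (fun x : ℝ => Real.exp (-x ^ 2)) (Ioi 0) := by
  have := (integrable_exp_neg_mul_sq (by norm_num : (0:ℝ) < 1)).integrableOn (s := Ioi 0)
  simpa using this

lemma erf_nonneg {x : ℝ} (hx : 0 ≤ x) : 0 ≤ erf x := by
  apply mul_nonneg (by positivity)
  exact intervalIntegral.integral_nonneg hx (fun t _ => (Real.exp_pos _).le)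

lemma erf_le_one (x : ℝ) : erf x ≤ 1 := by
  rcases le_or_gt x 0 with hx | hx
  · have : erf x ≤ 0 := by
      rw [erf, intervalIntegral.integral_symm]
      apply mul_nonpos_of_nonneg_of_nonpos (by positivity)
      simp only [neg_nonpos]
      exact intervalIntegral.integral_nonneg hx (fun t _ => (Real.exp_pos _).le)
    linarith
  · have h1 : (∫ t in (0:ℝ)..x, Real.exp (-t ^ 2)) ≤ Real.sqrt Real.pi / 2 := by
      rw [intervalIntegral.integral_of_le hx.le, ← integral_gauss_Ioi]
      apply setIntegral_mono_set integrableOn_gauss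
      · exact Eventually.of_forall fun t => (Real.exp_pos _).le
      · exact Eventually.of_forall fun t ht => ht.1
    have hs : 0 < Real.sqrt Real.pi := Real.sqrt_pos.2 Real.pi_pos
    calc erf x ≤ 2 / Real.sqrt Real.pi * (Real.sqrt Real.pi / 2) :=
          mul_le_mul_of_nonneg_left h1 (by positivity)
      _ = 1 := by field_simp

lemma erfc_nonneg (x : ℝ) : 0 ≤ erfc x := by
  have := erf_le_one x; simp [erfc]; linarith

lemma erfc_le_one {x : ℝ} (hx : 0 ≤ x) : erfc x ≤ 1 := by
  have := erf_nonneg hx; simp [erfc]; linarith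

lemma erfc_zero : erfc 0 = 1 := by simp [erfc, erf_zero]

lemma tendsto_erf_atTop : Tendsto erf atTop (𝓝 1) := by
  have h := intervalIntegral_tendsto_integral_Ioi 0 integrableOn_gauss tendsto_id
  rw [integral_gauss_Ioi] at h
  have h2 := h.const_mul (2 / Real.sqrt Real.pi)
  have hs : Real.sqrt Real.pi ≠ 0 := ne_of_gt (Real.sqrt_pos.2 Real.pi_pos)
  have hval : 2 / Real.sqrt Real.pi * (Real.sqrt Real.pi / 2) = 1 := by field_simp
  rw [hval] at h2
  exact h2

lemma tendsto_erfc_atTop : Tendsto erfc atTop (𝓝 0) := by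
  have := tendsto_const_nhds (α := ℝ) (x := (1:ℝ)) (f := atTop) |>.sub tendsto_erf_atTop
  simp only [sub_self] at this
  exact this

lemma hasDerivAt_erfc (x : ℝ) :
    HasDerivAt erfc (-(2 / Real.sqrt Real.pi * Real.exp (-x ^ 2))) x :=
  (hasDerivAt_erf x).const_sub 1

lemma integrable_gauss_shift (y : ℝ) : Integrable (fun t : ℝ => Real.exp (-2 * (t - y) ^ 2)) :=
  (integrable_exp_neg_mul_sq (by norm_num : (0:ℝ) < 2)).comp_sub_right y

lemma integrable_lin_gauss_shift (y : ℝ) :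
    Integrable (fun t : ℝ => t * Real.exp (-2 * (t - y) ^ 2)) := by
  have h := ((integrable_mul_exp_neg_mul_sq (by norm_num : (0:ℝ) < 2)).comp_sub_right y).add
    ((integrable_gauss_shift y).const_mul y)
  exact h.congr (Eventually.of_forall fun t => by simp only [Pi.add_apply]; ring)

lemma integrable_sq_gauss_shift (y : ℝ) :
    Integrable (fun t : ℝ => t ^ 2 * Real.exp (-2 * (t - y) ^ 2)) := by
  have hsq : Integrable (fun x : ℝ => x ^ 2 * Real.exp (-2 * x ^ 2)) := by
    have := integrable_rpow_mul_exp_neg_mul_sq (by norm_num : (0:ℝ) < 2)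
      (by norm_num : (-1:ℝ) < 2)
    refine this.congr (Eventually.of_forall fun x => ?_)
    norm_num [Real.rpow_natCast]
  have h := (hsq.comp_sub_right y).add
    ((((integrable_mul_exp_neg_mul_sq (by norm_num : (0:ℝ) < 2)).comp_sub_right y).const_mul
      (2*y)).add (((integrable_gauss_shift y)).const_mul (y^2)))
  exact h.congr (Eventually.of_forall fun t => by simp only [Pi.add_apply]; ring)

lemma hasDerivAt_F (y t : ℝ) :
    HasDerivAt (fun t =>
        Real.exp (-2 * (t - y) ^ 2) * ((t + y) / 4) * erfc t
          - Real.exp (-2 * (t - y) ^ 2) * Real.exp (-t ^ 2) / (4 * Real.sqrt Real.pi)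
          + Real.sqrt 3 * y / 4 * Real.exp (-2 * y ^ 2 / 3) *
              erf (Real.sqrt 3 * t - 2 * y / Real.sqrt 3))
      (Real.exp (-2 * (t - y) ^ 2) * t * (Real.exp (-t ^ 2) / Real.sqrt Real.pi - t * erfc t)
        + (1 / 4 + y ^ 2) * (Real.exp (-2 * (t - y) ^ 2) * erfc t)) t := by
  have d0 : HasDerivAt (fun t : ℝ => -2 * (t - y) ^ 2) (-2 * (2 * (t - y))) t := by
    have := (((hasDerivAt_id t).sub_const y).pow 2).const_mul (-2)
    simpa using this
  have dE1 : HasDerivAt (fun t : ℝ => Real.exp (-2 * (t - y) ^ 2))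
      (Real.exp (-2 * (t - y) ^ 2) * (-2 * (2 * (t - y)))) t := d0.exp
  have dE2 : HasDerivAt (fun t : ℝ => Real.exp (-t ^ 2))
      (Real.exp (-t ^ 2) * (-(2 * t))) t := by
    have d : HasDerivAt (fun t : ℝ => -t ^ 2) (-(2 * t)) t := by
      simpa using ((hasDerivAt_pow 2 t)).fun_neg
    exact d.exp
  have dlin : HasDerivAt (fun t : ℝ => (t + y) / 4) (1 / 4) t := by
    simpa using ((hasDerivAt_id t).add_const y).div_const 4
  have d1 : HasDerivAt (fun t => Real.exp (-2 * (t - y) ^ 2) * ((t + y) / 4) * erfc t)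
      ((Real.exp (-2 * (t - y) ^ 2) * (-2 * (2 * (t - y))) * ((t + y) / 4)
          + Real.exp (-2 * (t - y) ^ 2) * (1 / 4)) * erfc t
        + Real.exp (-2 * (t - y) ^ 2) * ((t + y) / 4) *
            (-(2 / Real.sqrt Real.pi * Real.exp (-t ^ 2)))) t :=
    (dE1.mul dlin).mul (hasDerivAt_erfc t)
  have d2 : HasDerivAt
      (fun t => Real.exp (-2 * (t - y) ^ 2) * Real.exp (-t ^ 2) / (4 * Real.sqrt Real.pi))
      ((Real.exp (-2 * (t - y) ^ 2) * (-2 * (2 * (t - y))) * Real.exp (-t ^ 2)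
          + Real.exp (-2 * (t - y) ^ 2) * (Real.exp (-t ^ 2) * (-(2 * t))))
        / (4 * Real.sqrt Real.pi)) t :=
    (dE1.mul dE2).div_const _
  have dinner : HasDerivAt (fun t : ℝ => Real.sqrt 3 * t - 2 * y / Real.sqrt 3)
      (Real.sqrt 3) t := by
    simpa using ((hasDerivAt_id t).const_mul (Real.sqrt 3)).sub_const (2 * y / Real.sqrt 3)
  have d3 : HasDerivAt
      (fun t => Real.sqrt 3 * y / 4 * Real.exp (-2 * y ^ 2 / 3) *
          erf (Real.sqrt 3 * t - 2 * y / Real.sqrt 3))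
      (Real.sqrt 3 * y / 4 * Real.exp (-2 * y ^ 2 / 3) *
        (2 / Real.sqrt Real.pi * Real.exp (-(Real.sqrt 3 * t - 2 * y / Real.sqrt 3) ^ 2) *
          Real.sqrt 3)) t :=
    (((hasDerivAt_erf _).comp t dinner)).const_mul _
  have := (d1.sub d2).add d3
  refine this.congr_deriv ?_; symm
  have h3 : Real.sqrt 3 ^ 2 = 3 := Real.sq_sqrt (by norm_num)
  have h3ne : Real.sqrt 3 ≠ 0 := by positivity
  have key : Real.exp (-2 * y ^ 2 / 3) *
      Real.exp (-(Real.sqrt 3 * t - 2 * y / Real.sqrt 3) ^ 2)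
      = Real.exp (-2 * (t - y) ^ 2) * Real.exp (-t ^ 2) := by
    have harg : (Real.sqrt 3 * t - 2 * y / Real.sqrt 3) ^ 2 = (3 * t - 2 * y) ^ 2 / 3 := by
      have h : Real.sqrt 3 * t - 2 * y / Real.sqrt 3 = (3 * t - 2 * y) / Real.sqrt 3 := by
        field_simp
        linear_combination t * h3
      rw [h, div_pow, h3]
    rw [← Real.exp_add, ← Real.exp_add, harg]
    congr 1
    ring
  linear_combination (-(y*Real.sqrt 3^2/(2*Real.sqrt Real.pi))) * key + (-(y*Real.exp (-2*(t-y)^2)*Real.exp (-t^2)/(2*Real.sqrt Real.pi))) * h3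

-- the tendsto of F at infinity
lemma tendsto_F (y : ℝ) :
    Tendsto (fun t =>
        Real.exp (-2 * (t - y) ^ 2) * ((t + y) / 4) * erfc t
          - Real.exp (-2 * (t - y) ^ 2) * Real.exp (-t ^ 2) / (4 * Real.sqrt Real.pi)
          + Real.sqrt 3 * y / 4 * Real.exp (-2 * y ^ 2 / 3) *
              erf (Real.sqrt 3 * t - 2 * y / Real.sqrt 3)) atTop
      (𝓝 (Real.sqrt 3 * y / 4 * Real.exp (-2 * y ^ 2 / 3))) := by
  have hE1 : Tendsto (fun t : ℝ => Real.exp (-2 * (t - y) ^ 2)) atTop (𝓝 0) := by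
    apply Real.tendsto_exp_atBot.comp
    have hsq : Tendsto (fun t : ℝ => (t - y) ^ 2) atTop atTop :=
      (tendsto_pow_atTop two_ne_zero).comp (tendsto_atTop_add_const_right atTop (-y) tendsto_id)
    exact hsq.const_mul_atTop_of_neg (by norm_num)
  have hlin : Tendsto (fun t : ℝ => Real.exp (-2 * (t - y) ^ 2) * ((t + y) / 4)) atTop (𝓝 0) := by
    have base : Tendsto (fun x : ℝ => x * Real.exp (-2 * x ^ 2)) atTop (𝓝 0) := by
      have ho := rpow_mul_exp_neg_mul_sq_isLittleO_exp_neg (by norm_num : (0:ℝ) < 2) 1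
      have hg : Tendsto (fun x : ℝ => Real.exp (-(1/2) * x)) atTop (𝓝 0) :=
        Real.tendsto_exp_atBot.comp (tendsto_id.const_mul_atTop_of_neg (by norm_num))
      have := ho.tendsto_zero_of_tendsto hg
      refine this.congr (fun x => ?_)
      rw [Real.rpow_one]
    have base2 : Tendsto (fun x : ℝ => Real.exp (-2 * x ^ 2)) atTop (𝓝 0) := by
      apply Real.tendsto_exp_atBot.comp
      exact (tendsto_pow_atTop two_ne_zero).const_mul_atTop_of_neg (by norm_num)
    have comb : Tendsto (fun x : ℝ => (x + 2*y) * Real.exp (-2 * x ^ 2) / 4) atTop (𝓝 0) := by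
      have := (base.add (base2.const_mul (2*y))).div_const 4
      simp only [zero_add, mul_zero, zero_div] at this ⊢
      refine (Tendsto.congr (fun x => by ring) this)
    have hcomp := comb.comp (tendsto_atTop_add_const_right atTop (-y) tendsto_id)
    refine hcomp.congr (fun t => ?_)
    simp only [Function.comp_apply, id_eq]
    ring_nf
  have t1 : Tendsto (fun t => Real.exp (-2 * (t - y) ^ 2) * ((t + y) / 4) * erfc t)
      atTop (𝓝 0) := by
    have := hlin.mul tendsto_erfc_atTop
    simpa using this
  have hE2 : Tendsto (fun t : ℝ => Real.exp (-t ^ 2)) atTop (𝓝 0) := by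
    apply Real.tendsto_exp_atBot.comp
    have := (tendsto_pow_atTop (two_ne_zero)).const_mul_atTop_of_neg
      (by norm_num : (-1:ℝ) < 0) (l := atTop) (f := fun t : ℝ => t ^ 2)
    refine Tendsto.congr (fun x => by ring) this
  have t2 : Tendsto (fun t => Real.exp (-2 * (t - y) ^ 2) * Real.exp (-t ^ 2)
      / (4 * Real.sqrt Real.pi)) atTop (𝓝 0) := by
    have := (hE1.mul hE2).div_const (4 * Real.sqrt Real.pi)
    simpa using this
  have t3 : Tendsto (fun t => Real.sqrt 3 * y / 4 * Real.exp (-2 * y ^ 2 / 3) *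
      erf (Real.sqrt 3 * t - 2 * y / Real.sqrt 3)) atTop
      (𝓝 (Real.sqrt 3 * y / 4 * Real.exp (-2 * y ^ 2 / 3))) := by
    have harg : Tendsto (fun t : ℝ => Real.sqrt 3 * t - 2 * y / Real.sqrt 3) atTop atTop := by
      apply tendsto_atTop_add_const_right
      exact tendsto_id.const_mul_atTop (Real.sqrt_pos.2 (by norm_num))
    have := (tendsto_erf_atTop.comp harg).const_mul (Real.sqrt 3 * y / 4 * Real.exp (-2 * y ^ 2 / 3))
    simpa [mul_one] using this
  have := (t1.sub t2).add t3
  simpa using this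

lemma g2_integrableOn (y : ℝ) :
    IntegrableOn (fun t : ℝ => Real.exp (-2 * (t - y) ^ 2) * erfc t) (Ioi 0) := by
  refine Integrable.mono' ((integrable_gauss_shift y).integrableOn)
    (((Real.continuous_exp.comp (by continuity)).mul continuous_erfc).aestronglyMeasurable.restrict)
    (((ae_restrict_iff' measurableSet_Ioi).2 (Eventually.of_forall fun t ht => ?_)))
  have h1 : (0:ℝ) ≤ erfc t := erfc_nonneg t
  have h2 : erfc t ≤ 1 := erfc_le_one (le_of_lt ht)
  have hE : (0:ℝ) < Real.exp (-2 * (t - y) ^ 2) := Real.exp_pos _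
  rw [Real.norm_eq_abs, abs_mul, abs_of_pos hE, abs_of_nonneg h1]
  nlinarith

lemma g1_integrableOn (y : ℝ) :
    IntegrableOn (fun t : ℝ => Real.exp (-2 * (t - y) ^ 2) * t *
      (Real.exp (-t ^ 2) / Real.sqrt Real.pi - t * erfc t)) (Ioi 0) := by
  have hB : Integrable (fun t : ℝ => t * Real.exp (-2 * (t - y) ^ 2) * (1 / Real.sqrt Real.pi)
      + t ^ 2 * Real.exp (-2 * (t - y) ^ 2)) :=
    ((integrable_lin_gauss_shift y).mul_const _).add (integrable_sq_gauss_shift y)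
  refine Integrable.mono' hB.integrableOn
    ((((Real.continuous_exp.comp (by continuity)).mul continuous_id).mul
      ((Real.continuous_exp.comp (by continuity)).div_const _ |>.sub
        (continuous_id.mul continuous_erfc))).aestronglyMeasurable.restrict)
    (((ae_restrict_iff' measurableSet_Ioi).2 (Eventually.of_forall fun t ht => ?_)))
  have ht' : (0:ℝ) < t := ht
  have h1 : (0:ℝ) ≤ erfc t := erfc_nonneg t
  have h2 : erfc t ≤ 1 := erfc_le_one ht'.le
  have hE : (0:ℝ) < Real.exp (-2 * (t - y) ^ 2) := Real.exp_pos _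
  have hE2 : (0:ℝ) < Real.exp (-t ^ 2) := Real.exp_pos _
  have hE2' : Real.exp (-t ^ 2) ≤ 1 := by
    rw [show (1:ℝ) = Real.exp 0 from (Real.exp_zero).symm]
    exact Real.exp_le_exp.2 (by nlinarith)
  have hsp : (0:ℝ) < Real.sqrt Real.pi := Real.sqrt_pos.2 Real.pi_pos
  rw [Real.norm_eq_abs, abs_mul, abs_mul, abs_of_pos hE, abs_of_pos ht']
  have hkey : Real.exp (-t ^ 2) / Real.sqrt Real.pi ≤ 1 / Real.sqrt Real.pi := by
    gcongr
  have hpos : (0:ℝ) ≤ Real.exp (-t ^ 2) / Real.sqrt Real.pi := by positivity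
  have htc : t * erfc t ≤ t := by nlinarith
  have htc0 : 0 ≤ t * erfc t := by positivity
  have habs : |Real.exp (-t ^ 2) / Real.sqrt Real.pi - t * erfc t|
      ≤ 1 / Real.sqrt Real.pi + t := by
    refine abs_le.2 ⟨by nlinarith [one_div_pos.2 hsp], by nlinarith [one_div_pos.2 hsp]⟩
  have := mul_le_mul_of_nonneg_left habs
    (by positivity : (0:ℝ) ≤ Real.exp (-2 * (t - y) ^ 2) * t)
  nlinarith [this]

/-- Exact identity expressing `A₂` in terms of `A₁`. -/
theorem A2_representation (y : ℝ) :
    A₂ y =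
      -(1 / (4 * Real.sqrt (2 * Real.pi))) * y * Real.exp (-2 * y ^ 2) +
        (1 / (4 * Real.sqrt 2 * Real.pi)) * Real.exp (-2 * y ^ 2) +
        (3 / (4 * Real.sqrt (6 * Real.pi))) * y * Real.exp (-2 * y ^ 2 / 3) *
          erfc (-2 * y / Real.sqrt 3) +
        (1 / 2 + 2 * y ^ 2) * A₁ y := by
  have hFTC := integral_Ioi_of_hasDerivAt_of_tendsto
    ((hasDerivAt_F y 0).continuousAt.continuousWithinAt)
    (fun x _ => hasDerivAt_F y x)
    ((g1_integrableOn y).add ((g2_integrableOn y).const_mul (1 / 4 + y ^ 2)))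
    (tendsto_F y)
  rw [integral_add (g1_integrableOn y) ((g2_integrableOn y).const_mul (1 / 4 + y ^ 2)),
    MeasureTheory.integral_const_mul] at hFTC
  have hg1 : (∫ t in Ioi (0:ℝ),
      Real.exp (-2 * (t - y) ^ 2) * t * (Real.exp (-t ^ 2) / Real.sqrt Real.pi - t * erfc t))
      = Real.sqrt 3 * y / 4 * Real.exp (-2 * y ^ 2 / 3)
        - (Real.exp (-2 * (0 - y) ^ 2) * ((0 + y) / 4) * erfc 0
          - Real.exp (-2 * (0 - y) ^ 2) * Real.exp (-(0:ℝ) ^ 2) / (4 * Real.sqrt Real.pi)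
          + Real.sqrt 3 * y / 4 * Real.exp (-2 * y ^ 2 / 3) *
              erf (Real.sqrt 3 * 0 - 2 * y / Real.sqrt 3))
        - (1 / 4 + y ^ 2) *
          ∫ t in Ioi (0:ℝ), Real.exp (-2 * (t - y) ^ 2) * erfc t := by
    linarith [hFTC]
  rw [A₂, A₁, hg1, erfc_zero]
  rw [show Real.exp (-2 * ((0:ℝ) - y) ^ 2) = Real.exp (-2 * y ^ 2) by ring_nf,
    show Real.sqrt 3 * 0 - 2 * y / Real.sqrt 3 = -2 * y / Real.sqrt 3 by ring,
    show Real.exp (-(0:ℝ) ^ 2) = 1 by norm_num]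
  rw [show erfc (-2 * y / Real.sqrt 3) = 1 - erf (-2 * y / Real.sqrt 3) from rfl]
  have h2p : Real.sqrt (2 * Real.pi) = Real.sqrt 2 * Real.sqrt Real.pi :=
    Real.sqrt_mul (by norm_num) _
  have h6p : Real.sqrt (6 * Real.pi) = Real.sqrt 2 * (Real.sqrt 3 * Real.sqrt Real.pi) := by
    rw [show (6:ℝ) * Real.pi = 2 * (3 * Real.pi) by ring, Real.sqrt_mul (by norm_num),
      Real.sqrt_mul (by norm_num)]
  have hs2 : Real.sqrt 2 ^ 2 = 2 := Real.sq_sqrt (by norm_num)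
  have hs3 : Real.sqrt 3 ^ 2 = 3 := Real.sq_sqrt (by norm_num)
  have hsp : Real.sqrt Real.pi ^ 2 = Real.pi := Real.sq_sqrt Real.pi_pos.le
  have hs2ne : Real.sqrt 2 ≠ 0 := by positivity
  have hs3ne : Real.sqrt 3 ≠ 0 := by positivity
  have hspne : Real.sqrt Real.pi ≠ 0 := ne_of_gt (Real.sqrt_pos.2 Real.pi_pos)
  have hc : 3 / (4 * Real.sqrt (6 * Real.pi)) = Real.sqrt 3 / (4 * Real.sqrt (2 * Real.pi)) := by
    rw [h6p, h2p, div_eq_div_iff (by positivity) (by positivity)]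
    linear_combination (-(4 * Real.sqrt 2 * Real.sqrt Real.pi)) * hs3
  rw [hc, h2p]
  set c := Real.sqrt Real.pi with hcdef
  rw [← hsp]
  field_simp
  ring
end

section
/- There exist constants C > 0 and y₀ < 0 such that for all y ≤ y₀, |A₂(y)| ≤ C e^{−2y²}/y²; that is, A₂(y) = O(y^{−2} e^{−2y²}) as y → −∞. -/
open MeasureTheory Real Filter

lemma int_val {b : ℝ} (hb : 0 < b) :
    ∫ t in Set.Ioi (0:ℝ), t * Real.exp (-(b * t)) = 1 / b ^ 2 := by
  have h := Real.integral_rpow_mul_exp_neg_mul_Ioi (a := 2) two_pos hb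
  rw [Real.Gamma_two, mul_one] at h
  have heq : ∫ t in Set.Ioi (0:ℝ), t * Real.exp (-(b * t)) =
      ∫ t in Set.Ioi (0:ℝ), t ^ ((2:ℝ) - 1) * Real.exp (-(b * t)) := by
    refine setIntegral_congr_fun measurableSet_Ioi (fun t ht => ?_)
    rw [show (2:ℝ) - 1 = 1 by norm_num, Real.rpow_one]
  rw [heq, h]
  rw [show ((1:ℝ)/b) ^ (2:ℝ) = ((1:ℝ)/b) ^ (2:ℕ) by
    rw [← Real.rpow_natCast]; norm_num]
  field_simp

lemma int_integrable {b : ℝ} (hb : 0 < b) :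
    IntegrableOn (fun t => t * Real.exp (-(b * t))) (Set.Ioi (0:ℝ)) := by
  have h := integrableOn_rpow_mul_exp_neg_mul_rpow (p := 1) (s := 1)
    (by norm_num) one_pos hb
  refine h.congr_fun (fun t ht => ?_) measurableSet_Ioi
  simp [neg_mul]

lemma sqrt_pi_ge_one : (1:ℝ) ≤ Real.sqrt Real.pi := by
  rw [show (1:ℝ) = Real.sqrt 1 by simp]
  exact Real.sqrt_le_sqrt (by linarith [Real.pi_gt_three])

lemma erf_nonneg_bound {t : ℝ} (ht : 0 ≤ t) : 0 ≤ erf t ∧ erf t ≤ 2 * t := by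
  have hint : ∀ s : ℝ, s ∈ Set.uIcc 0 t → Real.exp (-s ^ 2) ≤ 1 := fun s _ => by
    rw [show (1:ℝ) = Real.exp 0 by simp]
    exact Real.exp_le_exp.mpr (by nlinarith)
  have h1 : (0:ℝ) ≤ ∫ s in (0:ℝ)..t, Real.exp (-s ^ 2) :=
    intervalIntegral.integral_nonneg ht (fun s _ => (Real.exp_pos _).le)
  have h2 : (∫ s in (0:ℝ)..t, Real.exp (-s ^ 2)) ≤ ∫ s in (0:ℝ)..t, (1:ℝ) := by
    apply intervalIntegral.integral_mono_on ht
    · exact (Continuous.intervalIntegrable (by continuity) _ _)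
    · exact intervalIntegrable_const
    · intro s hs
      rw [show (1:ℝ) = Real.exp 0 by simp]
      exact Real.exp_le_exp.mpr (by nlinarith [hs.1])
  rw [intervalIntegral.integral_const, smul_eq_mul, mul_one, sub_zero] at h2
  have hc : 0 < 2 / Real.sqrt Real.pi := by positivity
  have hc1 : 2 / Real.sqrt Real.pi ≤ 2 := by
    rw [div_le_iff₀ (by linarith [sqrt_pi_ge_one])]
    nlinarith [sqrt_pi_ge_one]
  constructor
  · exact mul_nonneg hc.le h1
  · calc erf t ≤ 2 / Real.sqrt Real.pi * t := by
          unfold erf; exact mul_le_mul_of_nonneg_left h2 hc.le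
      _ ≤ 2 * t := mul_le_mul_of_nonneg_right hc1 ht

lemma abs_erfc_le {t : ℝ} (ht : 0 ≤ t) : |erfc t| ≤ 1 + 2 * t := by
  obtain ⟨h1, h2⟩ := erf_nonneg_bound ht
  rw [abs_le]; unfold erfc; constructor <;> nlinarith

lemma pointwise_bound {y t : ℝ} (hy : y ≤ 0) (ht : 0 < t) :
    ‖Real.exp (-2 * (t - y) ^ 2) * t *
        (Real.exp (-t ^ 2) / Real.sqrt Real.pi - t * erfc t)‖ ≤
      4 * Real.exp (-2 * y ^ 2) * (t * Real.exp (-((-4 * y) * t))) := by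
  have hsplit : Real.exp (-2 * (t - y) ^ 2) =
      Real.exp (-2 * y ^ 2) * Real.exp (-((-4 * y) * t)) * Real.exp (-2 * t ^ 2) := by
    rw [← Real.exp_add, ← Real.exp_add]; ring_nf
  have hg : |Real.exp (-t ^ 2) / Real.sqrt Real.pi - t * erfc t| ≤ 1 + t + 2 * t ^ 2 := by
    have h1 : Real.exp (-t ^ 2) / Real.sqrt Real.pi ≤ 1 := by
      rw [div_le_one (by linarith [sqrt_pi_ge_one])]
      calc Real.exp (-t ^ 2) ≤ Real.exp 0 := Real.exp_le_exp.mpr (by nlinarith)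
        _ = 1 := Real.exp_zero
        _ ≤ Real.sqrt Real.pi := sqrt_pi_ge_one
    have h2 : |t * erfc t| ≤ t * (1 + 2 * t) := by
      rw [abs_mul, abs_of_nonneg ht.le]
      exact mul_le_mul_of_nonneg_left (abs_erfc_le ht.le) ht.le
    have h3 : 0 ≤ Real.exp (-t ^ 2) / Real.sqrt Real.pi := by positivity
    rw [abs_le] at h2 ⊢
    constructor <;> nlinarith
  have hexp2 : Real.exp (-2 * t ^ 2) * (1 + t + 2 * t ^ 2) ≤ 4 := by
    have h := Real.add_one_le_exp (2 * t ^ 2)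
    have hpos := Real.exp_pos (2 * t ^ 2)
    rw [show (-2 : ℝ) * t ^ 2 = -(2 * t ^ 2) by ring, Real.exp_neg,
      inv_mul_le_iff₀ hpos]
    nlinarith
  calc ‖Real.exp (-2 * (t - y) ^ 2) * t *
        (Real.exp (-t ^ 2) / Real.sqrt Real.pi - t * erfc t)‖
      = Real.exp (-2 * y ^ 2) * Real.exp (-((-4 * y) * t)) * t *
          (Real.exp (-2 * t ^ 2) *
            |Real.exp (-t ^ 2) / Real.sqrt Real.pi - t * erfc t|) := by
        rw [Real.norm_eq_abs, abs_mul, abs_mul, hsplit,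
          abs_of_nonneg (by positivity : (0:ℝ) ≤
            Real.exp (-2 * y ^ 2) * Real.exp (-((-4 * y) * t)) * Real.exp (-2 * t ^ 2)),
          abs_of_nonneg ht.le]
        ring
    _ ≤ Real.exp (-2 * y ^ 2) * Real.exp (-((-4 * y) * t)) * t * 4 := by
        refine mul_le_mul_of_nonneg_left ?_ (by positivity)
        calc Real.exp (-2 * t ^ 2) * |Real.exp (-t ^ 2) / Real.sqrt Real.pi - t * erfc t|
            ≤ Real.exp (-2 * t ^ 2) * (1 + t + 2 * t ^ 2) :=
              mul_le_mul_of_nonneg_left hg (Real.exp_pos _).le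
          _ ≤ 4 := hexp2
    _ = 4 * Real.exp (-2 * y ^ 2) * (t * Real.exp (-((-4 * y) * t))) := by ring

/-- `A₂(y) = O(y^{−2} e^{−2y²})` as `y → −∞`. -/
theorem A2_asymptotics :
    ∃ C > (0 : ℝ), ∃ y₀ < (0 : ℝ), ∀ y ≤ y₀,
      |A₂ y| ≤ C * Real.exp (-2 * y ^ 2) / y ^ 2 := by
  refine ⟨1, one_pos, -1, by norm_num, fun y hy => ?_⟩
  have hy0 : y < 0 := lt_of_le_of_lt hy (by norm_num)
  have hb : (0:ℝ) < -4 * y := by linarith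
  have hy2 : (0:ℝ) < y ^ 2 := pow_two_pos_of_ne_zero hy0.ne
  set g : ℝ → ℝ := fun t => 4 * Real.exp (-2 * y ^ 2) * (t * Real.exp (-((-4 * y) * t)))
    with hg_def
  have hgint : IntegrableOn g (Set.Ioi (0:ℝ)) := (int_integrable hb).const_mul _
  have hbound : ∀ᵐ t ∂(volume.restrict (Set.Ioi (0:ℝ))),
      ‖Real.exp (-2 * (t - y) ^ 2) * t *
        (Real.exp (-t ^ 2) / Real.sqrt Real.pi - t * erfc t)‖ ≤ g t := by
    rw [ae_restrict_iff' measurableSet_Ioi]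
    exact Filter.Eventually.of_forall fun t ht => pointwise_bound hy0.le ht
  have hint_le : ‖∫ t in Set.Ioi (0:ℝ),
      Real.exp (-2 * (t - y) ^ 2) * t *
        (Real.exp (-t ^ 2) / Real.sqrt Real.pi - t * erfc t)‖ ≤
      ∫ t in Set.Ioi (0:ℝ), g t :=
    norm_integral_le_of_norm_le hgint hbound
  have hgval : (∫ t in Set.Ioi (0:ℝ), g t) = Real.exp (-2 * y ^ 2) / (4 * y ^ 2) := by
    rw [hg_def]
    rw [integral_const_mul, int_val hb]
    have : (-4 * y) ^ 2 = 16 * y ^ 2 := by ring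
    rw [this]
    field_simp
    ring
  have hc : (0:ℝ) < Real.sqrt (2 * Real.pi) := by positivity
  have hc1 : (1:ℝ) ≤ Real.sqrt (2 * Real.pi) := by
    rw [show (1:ℝ) = Real.sqrt 1 by simp]
    exact Real.sqrt_le_sqrt (by linarith [Real.pi_gt_three])
  rw [hgval] at hint_le
  unfold A₂
  rw [abs_mul, abs_of_nonneg (by positivity : (0:ℝ) ≤ 1 / Real.sqrt (2 * Real.pi))]
  rw [Real.norm_eq_abs] at hint_le
  calc 1 / Real.sqrt (2 * Real.pi) * |∫ t in Set.Ioi (0:ℝ),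
        Real.exp (-2 * (t - y) ^ 2) * t *
          (Real.exp (-t ^ 2) / Real.sqrt Real.pi - t * erfc t)|
      ≤ 1 * (Real.exp (-2 * y ^ 2) / (4 * y ^ 2)) := by
        apply mul_le_mul (by rw [div_le_one hc]; exact hc1) hint_le (abs_nonneg _)
        norm_num
    _ ≤ 1 * Real.exp (-2 * y ^ 2) / y ^ 2 := by
        rw [one_mul, one_mul, div_le_div_iff₀ (by positivity) hy2]
        nlinarith [Real.exp_pos (-2 * y ^ 2)]
end
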